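/- For a linear subspace W of ℝ^n defined over ℚ, let P = W ∩ [-1,1]^n. Then for every positive integer m, the set of integer points in the relative interior of mP equals the set of integer points in (m-1)P; i.e., m·P° ∩ ℤ^n = (m-1)·P ∩ ℤ^n. -/
import Mathlib


open scoped Pointwise

section aux

variable {n : ℕ} {W : Submodule ℝ (Fin n → ℝ)} {P : Set (Fin n → ℝ)}

lemma aux_spanP (hP : P = (W : Set (Fin n → ℝ)) ∩ {x | ∀ i, |x i| ≤ 1}) :
    (affineSpan ℝ P : Set (Fin n → ℝ)) = (W : Set (Fin n → ℝ)) := by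
  have h0P : (0 : Fin n → ℝ) ∈ P := by
    rw [hP]; exact ⟨W.zero_mem, fun i => by simp⟩
  apply Set.Subset.antisymm
  · intro x hx
    have hle : affineSpan ℝ P ≤ W.toAffineSubspace := by
      rw [affineSpan_le]
      intro y hy
      rw [hP] at hy
      exact hy.1
    exact (Submodule.mem_toAffineSubspace).mp (hle hx)
  · intro w hw
    set c : ℝ := (∑ i, |w i|) + 1 with hc
    have hcpos : 0 < c := by
      have : (0:ℝ) ≤ ∑ i, |w i| := Finset.sum_nonneg fun i _ => abs_nonneg _
      linarith
    have hpP : c⁻¹ • w ∈ P := by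
      rw [hP]
      refine ⟨W.smul_mem _ hw, fun i => ?_⟩
      have h1 : |w i| ≤ ∑ j, |w j| :=
        Finset.single_le_sum (f := fun j => |w j|) (fun j _ => abs_nonneg _)
          (Finset.mem_univ i)
      rw [Pi.smul_apply, smul_eq_mul, abs_mul,
        abs_of_nonneg (le_of_lt (inv_pos.mpr hcpos)), inv_mul_le_iff₀ hcpos, mul_one]
      linarith
    have := AffineMap.lineMap_mem (Q := affineSpan ℝ P) c
      (mem_affineSpan ℝ h0P) (mem_affineSpan ℝ hpP)
    have hl : AffineMap.lineMap (0 : Fin n → ℝ) (c⁻¹ • w) c = w := by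
      rw [AffineMap.lineMap_apply]
      simp [smul_smul, mul_inv_cancel₀ (ne_of_gt hcpos)]
    rwa [hl] at this

lemma aux_relint (hP : P = (W : Set (Fin n → ℝ)) ∩ {x | ∀ i, |x i| ≤ 1}) :
    intrinsicInterior ℝ P = (W : Set (Fin n → ℝ)) ∩ {x | ∀ i, |x i| < 1} := by
  have hspan := aux_spanP hP
  have hopen : IsOpen {v : Fin n → ℝ | ∀ i, |v i| < 1} := by
    have he : {v : Fin n → ℝ | ∀ i, |v i| < 1} = ⋂ i, {v | |v i| < 1} := by
      ext v; simp
    rw [he]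
    exact isOpen_iInter_of_finite fun i =>
      isOpen_lt (continuous_abs.comp (continuous_apply i)) continuous_const
  have hcube : ∀ x ∈ P, ∀ i, |x i| ≤ 1 := by
    rw [hP]; exact fun x hx => hx.2
  have hsup : (W : Set (Fin n → ℝ)) ∩ {x | ∀ i, |x i| < 1} ⊆ P := by
    rw [hP]; exact fun x hx => ⟨hx.1, fun i => le_of_lt (hx.2 i)⟩
  apply Set.Subset.antisymm
  · rintro x ⟨y, hy, rfl⟩
    have hyW : (y : Fin n → ℝ) ∈ W := by
      have := y.2
      rw [← SetLike.mem_coe, hspan] at this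
      exact this
    refine ⟨hyW, fun i => ?_⟩
    -- find t > 0 with (1+t) • y ∈ P
    have hmem : ∀ t : ℝ, (1 + t) • (y : Fin n → ℝ) ∈ affineSpan ℝ P := by
      intro t
      have : (1 + t) • (y : Fin n → ℝ) ∈ W := W.smul_mem _ hyW
      rw [← SetLike.mem_coe, hspan]
      exact this
    set f : ℝ → affineSpan ℝ P := fun t => ⟨(1 + t) • (y : Fin n → ℝ), hmem t⟩ with hf
    have hfc : Continuous f := by
      apply Continuous.subtype_mk
      exact (continuous_const.add continuous_id).smul continuous_const
    have hf0 : f 0 ∈ interior ((↑) ⁻¹' P : Set <| affineSpan ℝ P) := by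
      have : f 0 = y := by
        apply Subtype.ext
        simp [hf]
      rwa [this]
    have hopen' : IsOpen (f ⁻¹' interior ((↑) ⁻¹' P : Set <| affineSpan ℝ P)) :=
      isOpen_interior.preimage hfc
    have h0' : (0:ℝ) ∈ f ⁻¹' interior ((↑) ⁻¹' P : Set <| affineSpan ℝ P) := hf0
    obtain ⟨ε, hε, hball⟩ := Metric.mem_nhds_iff.mp (hopen'.mem_nhds h0')
    have ht : f (ε/2) ∈ interior ((↑) ⁻¹' P : Set <| affineSpan ℝ P) := by
      apply hball
      rw [Metric.mem_ball, Real.dist_eq, sub_zero, abs_of_pos (half_pos hε)]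
      linarith
    have htP : (1 + ε/2) • (y : Fin n → ℝ) ∈ P := by
      have := interior_subset ht
      exact this
    have hi := hcube _ htP i
    simp only [Pi.smul_apply, smul_eq_mul, abs_mul] at hi
    have h1 : |1 + ε/2| = 1 + ε/2 := abs_of_pos (by linarith)
    rw [h1] at hi
    nlinarith [abs_nonneg ((y : Fin n → ℝ) i)]
  · rintro x ⟨hxW, hxc⟩
    have hxspan : x ∈ affineSpan ℝ P := by
      rw [← SetLike.mem_coe, hspan]; exact hxW
    refine ⟨⟨x, hxspan⟩, ?_, rfl⟩
    have hsub : (Subtype.val ⁻¹' {v : Fin n → ℝ | ∀ i, |v i| < 1} :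
        Set (affineSpan ℝ P)) ⊆ Subtype.val ⁻¹' P := by
      intro y hy
      have hyW : (y : Fin n → ℝ) ∈ W := by
        have := y.2
        rw [← SetLike.mem_coe, hspan] at this
        exact this
      exact hsup ⟨hyW, hy⟩
    have hopen'' : IsOpen (Subtype.val ⁻¹' {v : Fin n → ℝ | ∀ i, |v i| < 1} :
        Set (affineSpan ℝ P)) := hopen.preimage continuous_subtype_val
    exact interior_maximal hsub hopen'' (show _ ∈ _ from hxc)

end aux

/-- For a linear subspace `W` of `ℝ^n` defined over `ℚ` (spanned by rational
vectors) and `P = W ∩ [-1,1]^n`, for every positive integer `m` the integer points of the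
dilate `m · P°` of the relative interior of `P` coincide with the integer points of
`(m-1) · P`. -/
theorem stmt0 (n : ℕ) (W : Submodule ℝ (Fin n → ℝ))
    (hW : ∃ S : Set (Fin n → ℚ),
      W = Submodule.span ℝ ((fun v : Fin n → ℚ => fun i => ((v i : ℚ) : ℝ)) '' S))
    (P : Set (Fin n → ℝ)) (hP : P = (W : Set (Fin n → ℝ)) ∩ {x | ∀ i, |x i| ≤ 1})
    (m : ℕ) (hm : 0 < m) :
    {z : Fin n → ℤ | (fun i => ((z i : ℤ) : ℝ)) ∈ (m : ℝ) • intrinsicInterior ℝ P} =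
    {z : Fin n → ℤ | (fun i => ((z i : ℤ) : ℝ)) ∈ ((m : ℝ) - 1) • P} := by
  have hrel := aux_relint hP
  have hmR : (0:ℝ) < (m:ℝ) := by exact_mod_cast hm
  ext z
  simp only [Set.mem_setOf_eq]
  constructor
  · rintro ⟨x, hx, hxz⟩
    rw [hrel] at hx
    obtain ⟨hxW, hxc⟩ := hx
    have hzW : (fun i => ((z i : ℤ) : ℝ)) ∈ W := by
      rw [← hxz]; exact W.smul_mem _ hxW
    have hzb : ∀ i, |z i| ≤ (m : ℤ) - 1 := by
      intro i
      have h1 : ((z i : ℤ) : ℝ) = (m:ℝ) * x i := congrFun hxz.symm i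
      have h2 : |((z i : ℤ) : ℝ)| < m := by
        rw [h1, abs_mul, abs_of_pos hmR]
        have := hxc i
        nlinarith
      have h3 : |z i| < (m : ℤ) := by
        rw [← Int.cast_abs] at h2
        exact_mod_cast h2
      omega
    rcases eq_or_lt_of_le (Nat.one_le_iff_ne_zero.mpr (Nat.pos_iff_ne_zero.mp hm)) with h1 | h2
    · -- m = 1
      have hm1 : m = 1 := h1.symm
      subst hm1
      refine ⟨0, ?_, ?_⟩
      · rw [hP]; exact ⟨W.zero_mem, fun i => by simp⟩
      · have hz0 : ∀ i, z i = 0 := by intro i; have := hzb i; simp at this; omega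
        funext i
        simp [hz0 i]
    · -- m ≥ 2
      have hc : (0:ℝ) < (m:ℝ) - 1 := by
        have : (2:ℝ) ≤ m := by exact_mod_cast h2
        linarith
      refine ⟨((m:ℝ) - 1)⁻¹ • (fun i => ((z i : ℤ) : ℝ)), ?_, ?_⟩
      · rw [hP]
        refine ⟨W.smul_mem _ hzW, fun i => ?_⟩
        have hzi : |((z i : ℤ) : ℝ)| ≤ (m:ℝ) - 1 := by
          have := hzb i
          have : ((|z i| : ℤ) : ℝ) ≤ ((m : ℤ) : ℝ) - 1 := by exact_mod_cast this
          rwa [Int.cast_abs] at this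
        simp only [Pi.smul_apply, smul_eq_mul, abs_mul,
          abs_of_pos (inv_pos.mpr hc)]
        rw [inv_mul_le_iff₀ hc, mul_one]
        exact hzi
      · show ((m:ℝ) - 1) • (((m:ℝ) - 1)⁻¹ • (fun i => ((z i : ℤ) : ℝ))) = _
        rw [smul_inv_smul₀ (ne_of_gt hc)]
  · rintro ⟨p, hp, hpz⟩
    rw [hP] at hp
    obtain ⟨hpW, hpc⟩ := hp
    have hzW : (fun i => ((z i : ℤ) : ℝ)) ∈ W := by
      rw [← hpz]; exact W.smul_mem _ hpW
    have hm1 : (0:ℝ) ≤ (m:ℝ) - 1 := by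
      have : (1:ℝ) ≤ m := by exact_mod_cast hm
      linarith
    have hzb : ∀ i, |((z i : ℤ) : ℝ)| ≤ (m:ℝ) - 1 := by
      intro i
      have h1 : ((z i : ℤ) : ℝ) = ((m:ℝ) - 1) * p i := congrFun hpz.symm i
      rw [h1, abs_mul, abs_of_nonneg hm1]
      calc ((m:ℝ) - 1) * |p i| ≤ ((m:ℝ) - 1) * 1 :=
            mul_le_mul_of_nonneg_left (hpc i) hm1
        _ = (m:ℝ) - 1 := mul_one _
    refine ⟨(m:ℝ)⁻¹ • (fun i => ((z i : ℤ) : ℝ)), ?_, ?_⟩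
    · rw [hrel]
      refine ⟨W.smul_mem _ hzW, fun i => ?_⟩
      simp only [Pi.smul_apply, smul_eq_mul, abs_mul, abs_of_pos (inv_pos.mpr hmR)]
      rw [inv_mul_lt_iff₀ hmR, mul_one]
      calc |((z i : ℤ) : ℝ)| ≤ (m:ℝ) - 1 := hzb i
        _ < m := by linarith
    · show (m:ℝ) • ((m:ℝ)⁻¹ • (fun i => ((z i : ℤ) : ℝ))) = _
      rw [smul_inv_smul₀ (ne_of_gt hmR)]
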